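/- Let T be a tree which is not a star and which has two pendant edges sharing a common endpoint. Then T has at least four vertices that are pairwise distinct, v_i, v_p, v_q, v_k, such that the pairs (v_p, v_i), (v_q, v_i), (v_p, v_k), (v_q, v_k) are all maximally matchable; consequently the group inverse graph T# contains a 4-cycle and is not a tree. -/
import Mathlib


open SimpleGraph

/-- `X` is the group inverse of `A`. -/
def IsGroupInverse {n : Type*} [Fintype n] (A X : Matrix n n ℝ) : Prop :=
  A * X * A = A ∧ X * A * X = X ∧ A * X = X * A

/-- A matching of a graph: a set of pairwise non-incident edges. -/
def IsMatching {V : Type*} (G : SimpleGraph V) (M : Finset (Sym2 V)) : Prop :=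
  (↑M : Set (Sym2 V)) ⊆ G.edgeSet ∧
    ∀ e ∈ M, ∀ f ∈ M, e ≠ f → ∀ v : V, ¬(v ∈ e ∧ v ∈ f)

/-- A maximum matching: a matching of maximum cardinality. -/
def IsMaxMatching {V : Type*} (G : SimpleGraph V) (M : Finset (Sym2 V)) : Prop :=
  IsMatching G M ∧ ∀ N : Finset (Sym2 V), IsMatching G N → N.card ≤ M.card

/-- A nonempty list of edges alternately in and out of `M`,
beginning and ending with edges of `M`. -/
def IsAltEdgeList {V : Type*} (M : Set (Sym2 V)) : List (Sym2 V) → Prop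
  | [] => False
  | [e] => e ∈ M
  | e :: f :: rest => e ∈ M ∧ f ∉ M ∧ IsAltEdgeList M rest

/-- A pair of vertices is maximally matchable if they are joined by a path that is
alternating with respect to some maximum matching. -/
def MaxMatchable {V : Type*} (G : SimpleGraph V) (u v : V) : Prop :=
  ∃ (p : G.Walk u v) (M : Finset (Sym2 V)),
    p.IsPath ∧ IsMaxMatching G M ∧ IsAltEdgeList (↑M) p.edges

/-- `G` is a star: some center `c` is adjacent to exactly the other vertices,
and there are no other edges. -/
def IsStar {V : Type*} (G : SimpleGraph V) : Prop :=
  ∃ c : V, ∀ u v : V, G.Adj u v ↔ ((u = c ∧ v ≠ c) ∨ (v = c ∧ u ≠ c))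

/-- The class 𝕋: trees with at least one non-pendant vertex in which every
non-pendant vertex is adjacent to a pendant vertex. -/
def InClassT {V : Type*} [Fintype V] (T : SimpleGraph V) [DecidableRel T.Adj] : Prop :=
  T.IsTree ∧ (∃ v, T.degree v ≠ 1) ∧
    ∀ v, T.degree v ≠ 1 → ∃ u, T.Adj v u ∧ T.degree u = 1

/-- The number of pendant neighbours of `v`. -/
def pendantNbrs {V : Type*} [Fintype V] [DecidableEq V] (T : SimpleGraph V)
    [DecidableRel T.Adj] (v : V) : ℕ :=
  ((T.neighborFinset v).filter fun u => T.degree u = 1).card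

section Helpers
variable {V : Type*} {G : SimpleGraph V} {M : Finset (Sym2 V)}

lemma IsMatching.eq_of_mem {e f : Sym2 V} {v : V} (hM : IsMatching G M)
    (he : e ∈ M) (hf : f ∈ M) (hv : v ∈ e) (hv' : v ∈ f) : e = f := by
  by_contra h
  exact hM.2 e he f hf h v ⟨hv, hv'⟩

lemma matching_insert_of [DecidableEq (Sym2 V)] {S : Finset (Sym2 V)}
    (hM : IsMatching G M) (hS : S ⊆ M)
    {a b : V} (hab : G.Adj a b) (ha : ∀ f ∈ S, a ∉ f) (hb : ∀ f ∈ S, b ∉ f) :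
    IsMatching G (insert s(a, b) S) := by
  constructor
  · intro e he
    simp only [Finset.coe_insert, Set.mem_insert_iff] at he
    rcases he with rfl | he
    · exact hab
    · exact hM.1 (hS he)
  · intro e he f hf hef v hv
    simp only [Finset.mem_insert] at he hf
    rcases he with rfl | he <;> rcases hf with rfl | hf
    · exact hef rfl
    · rcases Sym2.mem_iff.1 hv.1 with rfl | rfl
      · exact ha f hf hv.2
      · exact hb f hf hv.2
    · rcases Sym2.mem_iff.1 hv.2 with rfl | rfl
      · exact ha e he hv.1
      · exact hb e he hv.1
    · exact hM.2 e (hS he) f (hS hf) hef v hv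

lemma new_edge_notMem {S : Finset (Sym2 V)} {a b : V} (ha : ∀ f ∈ S, a ∉ f) :
    s(a, b) ∉ S := fun h => ha _ h (Sym2.mem_mk_left a b)

lemma exists_max_matching [Fintype V] (G : SimpleGraph V) : ∃ M, IsMaxMatching G M := by
  classical
  set S : Set ℕ := {n | ∃ M : Finset (Sym2 V), IsMatching G M ∧ M.card = n} with hSdef
  have h0 : 0 ∈ S := ⟨∅, ⟨by simp, by simp⟩, rfl⟩
  have hbdd : BddAbove S := by
    refine ⟨Fintype.card (Sym2 V), ?_⟩
    rintro n ⟨M, _, rfl⟩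
    exact Finset.card_le_univ M
  obtain ⟨M, hM, hcard⟩ := Nat.sSup_mem ⟨0, h0⟩ hbdd
  refine ⟨M, hM, fun N hN => ?_⟩
  rw [hcard]
  exact le_csSup hbdd ⟨N, hN, rfl⟩

lemma pendant_unique [Fintype V] {T : SimpleGraph V} [DecidableRel T.Adj] {p c y : V}
    (hp : T.degree p = 1) (hc : T.Adj p c) (hy : T.Adj p y) : y = c := by
  classical
  rw [← SimpleGraph.card_neighborFinset_eq_degree] at hp
  obtain ⟨a, ha⟩ := Finset.card_eq_one.1 hp
  have h1 : c ∈ T.neighborFinset p := by rwa [SimpleGraph.mem_neighborFinset]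
  have h2 : y ∈ T.neighborFinset p := by rwa [SimpleGraph.mem_neighborFinset]
  rw [ha, Finset.mem_singleton] at h1 h2
  rw [h1, h2]

end Helpers

/-- A tree, other than a star, with two pendant edges sharing a common
endpoint, has four pairwise distinct vertices forming four maximally matchable pairs;
consequently its group inverse graph contains a 4-cycle and is not a tree. -/
theorem two_adjacent_pendant_edges_not_tree {V : Type*} [Fintype V]
    (T : SimpleGraph V) [DecidableRel T.Adj]
    (hT : T.IsTree) (hstar : ¬ IsStar T)
    (c p q : V) (hpq : p ≠ q) (hcp : T.Adj c p) (hcq : T.Adj c q)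
    (hp : T.degree p = 1) (hq : T.degree q = 1) :
    (∃ vi vp vq vk : V, [vi, vp, vq, vk].Pairwise (· ≠ ·) ∧
      MaxMatchable T vp vi ∧ MaxMatchable T vq vi ∧
      MaxMatchable T vp vk ∧ MaxMatchable T vq vk) ∧
    ¬ (SimpleGraph.fromRel (MaxMatchable T)).IsTree := by
  classical
  -- Step A: find x, k with c—x—k a path leaving c
  have hconfig : ∃ x k, T.Adj c x ∧ T.Adj x k ∧ k ≠ c := by
    by_contra hcfg
    push_neg at hcfg
    apply hstar
    refine ⟨c, fun u v => ?_⟩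
    have key0 : ∀ (u v : V) (w : T.Walk u v),
        (∀ x k, T.Adj v x → T.Adj x k → k = v) → u = v ∨ T.Adj u v := by
      intro u v w
      induction w with
      | nil => exact fun _ => Or.inl rfl
      | @cons a b _ hab _ ih =>
        intro hc'
        rcases ih hc' with rfl | hyc
        · exact Or.inr hab
        · exact Or.inl (hc' _ _ hyc.symm hab.symm)
    have key : ∀ v (w : T.Walk v c), v = c ∨ T.Adj v c := fun v w => key0 v c w hcfg
    have hadj : ∀ v, v ≠ c → T.Adj v c := by
      intro v hv
      obtain ⟨w⟩ := hT.isConnected.preconnected v c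
      rcases key v w with rfl | h'
      · exact absurd rfl hv
      · exact h'
    constructor
    · intro huv
      by_cases hu : u = c
      · subst hu; exact Or.inl ⟨rfl, huv.ne'⟩
      · by_cases hv : v = c
        · exact Or.inr ⟨hv, hu⟩
        · exact absurd (hcfg u v (hadj u hu).symm huv) hv
    · rintro (⟨rfl, hv⟩ | ⟨rfl, hu⟩)
      · exact (hadj v hv).symm
      · exact hadj u hu
  obtain ⟨x, k, hcx, hxk, hkc⟩ := hconfig
  -- distinctness facts
  have hpc : p ≠ c := hcp.ne'
  have hqc : q ≠ c := hcq.ne'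
  have hxc : x ≠ c := hcx.ne'
  have hxp : x ≠ p := by
    rintro rfl; exact hkc (pendant_unique hp hcp.symm hxk)
  have hxq : x ≠ q := by
    rintro rfl; exact hkc (pendant_unique hq hcq.symm hxk)
  have hkx : k ≠ x := hxk.ne'
  have hkp : k ≠ p := by
    rintro rfl; exact hxc (pendant_unique hp hcp.symm hxk.symm)
  have hkq : k ≠ q := by
    rintro rfl; exact hxc (pendant_unique hq hcq.symm hxk.symm)
  -- any matching edge containing a pendant vertex r (adjacent to c) is s(c,r)
  have pend_edge : ∀ (N : Finset (Sym2 V)), IsMatching T N → ∀ r : V, T.degree r = 1 →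
      T.Adj c r → ∀ f ∈ N, r ∈ f → f = s(c, r) := by
    intro N hN r hr hcr f hf hrf
    obtain ⟨w, rfl⟩ := Sym2.mem_iff_exists.1 hrf
    have hadj : T.Adj r w := hN.1 hf
    rw [pendant_unique hr hcr.symm hadj, Sym2.eq_swap]
  -- Step B
  obtain ⟨M₀, hM₀⟩ := exists_max_matching T
  -- Step C: a maximum matching containing s(c,p)
  have stepC : ∃ M, IsMaxMatching T M ∧ s(c, p) ∈ M := by
    by_cases hin : s(c, p) ∈ M₀
    · exact ⟨M₀, hM₀, hin⟩
    have hpfree : ∀ f ∈ M₀, p ∉ f := by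
      intro f hf hpf
      exact hin ((pend_edge M₀ hM₀.1 p hp hcp f hf hpf) ▸ hf)
    by_cases hc : ∃ e ∈ M₀, c ∈ e
    · obtain ⟨e, he, hce⟩ := hc
      have hcfree : ∀ f ∈ M₀.erase e, c ∉ f := by
        intro f hf hcf
        exact (Finset.ne_of_mem_erase hf)
          (hM₀.1.eq_of_mem (Finset.mem_of_mem_erase hf) he hcf hce)
      have hMa := matching_insert_of hM₀.1 (Finset.erase_subset e M₀) hcp hcfree
        (fun f hf => hpfree f (Finset.mem_of_mem_erase hf))
      have hcard : (insert s(c, p) (M₀.erase e)).card = M₀.card := by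
        have h1 := Finset.card_pos.2 ⟨e, he⟩
        rw [Finset.card_insert_of_notMem (new_edge_notMem hcfree),
          Finset.card_erase_of_mem he]
        omega
      refine ⟨_, ⟨hMa, fun N hN => ?_⟩, Finset.mem_insert_self _ _⟩
      rw [hcard]; exact hM₀.2 N hN
    · push_neg at hc
      have hMa := matching_insert_of hM₀.1 (subset_refl _) hcp hc hpfree
      have hle := hM₀.2 _ hMa
      rw [Finset.card_insert_of_notMem (new_edge_notMem hc)] at hle
      omega
  obtain ⟨Ma, hMa, hcpMa⟩ := stepC
  -- Step D: a maximum matching containing s(c,p) and s(x,k') for some k' ≠ c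
  have stepD : ∃ M, IsMaxMatching T M ∧ s(c, p) ∈ M ∧
      ∃ k', T.Adj x k' ∧ k' ≠ c ∧ s(x, k') ∈ M := by
    by_cases hx : ∃ e ∈ Ma, x ∈ e
    · obtain ⟨e, he, hxe⟩ := hx
      obtain ⟨z, rfl⟩ := Sym2.mem_iff_exists.1 hxe
      have hadj : T.Adj x z := hMa.1.1 he
      have hzc : z ≠ c := by
        intro hz
        rw [hz] at he
        have h2 : s(x, c) = s(c, p) := hMa.1.eq_of_mem he hcpMa
          (Sym2.mem_mk_right x c) (Sym2.mem_mk_left c p)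
        rw [Sym2.eq_iff] at h2
        rcases h2 with ⟨h1, _⟩ | ⟨h3, _⟩
        · exact hxc h1
        · exact hxp h3
      exact ⟨Ma, hMa, hcpMa, z, hadj, hzc, he⟩
    · push_neg at hx
      by_cases hk : ∃ e ∈ Ma, k ∈ e
      · obtain ⟨f, hf, hkf⟩ := hk
        have hkfree : ∀ g ∈ Ma.erase f, k ∉ g := by
          intro g hg hkg
          exact (Finset.ne_of_mem_erase hg)
            (hMa.1.eq_of_mem (Finset.mem_of_mem_erase hg) hf hkg hkf)
        have hM₁ := matching_insert_of hMa.1 (Finset.erase_subset f Ma) hxk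
          (fun g hg => hx g (Finset.mem_of_mem_erase hg)) hkfree
        have hcard : (insert s(x, k) (Ma.erase f)).card = Ma.card := by
          have h1 := Finset.card_pos.2 ⟨f, hf⟩
          rw [Finset.card_insert_of_notMem
            (new_edge_notMem (fun g hg => hx g (Finset.mem_of_mem_erase hg))),
            Finset.card_erase_of_mem hf]
          omega
        have hcpM₁ : s(c, p) ∈ insert s(x, k) (Ma.erase f) := by
          apply Finset.mem_insert_of_mem
          refine Finset.mem_erase.2 ⟨?_, hcpMa⟩
          rintro rfl
          rcases Sym2.mem_iff.1 hkf with h | h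
          · exact hkc h
          · exact hkp h
        refine ⟨_, ⟨hM₁, fun N hN => ?_⟩, hcpM₁, k, hxk, hkc, Finset.mem_insert_self _ _⟩
        rw [hcard]; exact hMa.2 N hN
      · push_neg at hk
        have hM₁ := matching_insert_of hMa.1 (subset_refl _) hxk hx hk
        have hle := hMa.2 _ hM₁
        rw [Finset.card_insert_of_notMem (new_edge_notMem hx)] at hle
        omega
  obtain ⟨M₁, hM₁, hcpM₁, k', hxk', hk'c, hxkM₁⟩ := stepD
  -- distinctness for k'
  have hk'x : k' ≠ x := hxk'.ne'
  have hk'p : k' ≠ p := by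
    intro h; rw [h] at hxk'; exact hxc (pendant_unique hp hcp.symm hxk'.symm)
  have hk'q : k' ≠ q := by
    intro h; rw [h] at hxk'; exact hxc (pendant_unique hq hcq.symm hxk'.symm)
  -- c is only matched in M₁ by s(c,p)
  have hcuniq : ∀ f ∈ M₁, c ∈ f → f = s(c, p) := fun f hf hcf =>
    hM₁.1.eq_of_mem hf hcpM₁ hcf (Sym2.mem_mk_left c p)
  have hqfree : ∀ f ∈ M₁, q ∉ f := by
    intro f hf hqf
    have hfq := pend_edge M₁ hM₁.1 q hq hcq f hf hqf
    have hfp := hcuniq f hf (hfq ▸ Sym2.mem_mk_left c q)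
    rw [hfq] at hfp
    rw [Sym2.eq_iff] at hfp
    rcases hfp with ⟨_, h⟩ | ⟨_, h⟩
    · exact hpq h.symm
    · exact hqc h
  -- Step E: M₂ = insert s(c,q) (M₁.erase s(c,p)), maximum, contains s(c,q), s(x,k')
  have hcfree₁ : ∀ f ∈ M₁.erase s(c, p), c ∉ f := by
    intro f hf hcf
    exact (Finset.ne_of_mem_erase hf) (hcuniq f (Finset.mem_of_mem_erase hf) hcf)
  have hM₂mat := matching_insert_of hM₁.1 (Finset.erase_subset _ M₁) hcq hcfree₁
    (fun f hf => hqfree f (Finset.mem_of_mem_erase hf))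
  have hM₂card : (insert s(c, q) (M₁.erase s(c, p))).card = M₁.card := by
    have h1 := Finset.card_pos.2 ⟨_, hcpM₁⟩
    rw [Finset.card_insert_of_notMem (new_edge_notMem hcfree₁),
      Finset.card_erase_of_mem hcpM₁]
    omega
  set M₂ := insert s(c, q) (M₁.erase s(c, p)) with hM₂def
  have hM₂ : IsMaxMatching T M₂ := ⟨hM₂mat, fun N hN => by rw [hM₂card]; exact hM₁.2 N hN⟩
  have hcqM₂ : s(c, q) ∈ M₂ := Finset.mem_insert_self _ _
  have hxkM₂ : s(x, k') ∈ M₂ := by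
    apply Finset.mem_insert_of_mem
    refine Finset.mem_erase.2 ⟨?_, hxkM₁⟩
    intro h
    rw [Sym2.eq_iff] at h
    rcases h with ⟨h, _⟩ | ⟨_, h⟩
    · exact hxc h
    · exact hk'c h
  -- s(c,x) is in neither M₁ nor M₂
  have hcxM₁ : s(c, x) ∉ M₁ := by
    intro h
    have := hcuniq _ h (Sym2.mem_mk_left c x)
    rw [Sym2.eq_iff] at this
    rcases this with ⟨_, h2⟩ | ⟨_, h2⟩
    · exact hxp h2
    · exact hxc h2
  have hcxM₂ : s(c, x) ∉ M₂ := by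
    intro h
    have := hM₂.1.eq_of_mem h hcqM₂ (Sym2.mem_mk_left c x) (Sym2.mem_mk_left c q)
    rw [Sym2.eq_iff] at this
    rcases this with ⟨_, h2⟩ | ⟨_, h2⟩
    · exact hxq h2
    · exact hxc h2
  -- the four MaxMatchable facts
  have mm_pc : MaxMatchable T p c := by
    refine ⟨Walk.cons hcp.symm Walk.nil, M₁, ?_, hM₁, ?_⟩
    · simp [hpc]
    · show IsAltEdgeList (↑M₁) [s(p, c)]
      show s(p, c) ∈ (↑M₁ : Set (Sym2 V))
      rw [Sym2.eq_swap]
      exact hcpM₁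
  have mm_qc : MaxMatchable T q c := by
    refine ⟨Walk.cons hcq.symm Walk.nil, M₂, ?_, hM₂, ?_⟩
    · simp [hqc]
    · show IsAltEdgeList (↑M₂) [s(q, c)]
      show s(q, c) ∈ (↑M₂ : Set (Sym2 V))
      rw [Sym2.eq_swap]
      exact hcqM₂
  have mm_pk : MaxMatchable T p k' := by
    refine ⟨Walk.cons hcp.symm (Walk.cons hcx (Walk.cons hxk' Walk.nil)), M₁, ?_, hM₁, ?_⟩
    · simp only [Walk.cons_isPath_iff, Walk.isPath_iff_eq_nil, Walk.support_cons,
        Walk.support_nil, List.mem_cons, List.not_mem_nil, or_false, List.mem_singleton]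
      refine ⟨⟨⟨trivial, fun h => hk'x h.symm⟩, ?_⟩, ?_⟩
      · rintro (rfl | h)
        · exact hxc rfl
        · exact hk'c h.symm
      · rintro (rfl | rfl | h)
        · exact hpc rfl
        · exact hxp rfl
        · exact hk'p h.symm
    · show IsAltEdgeList (↑M₁) [s(p, c), s(c, x), s(x, k')]
      refine ⟨?_, hcxM₁, hxkM₁⟩
      show s(p, c) ∈ (↑M₁ : Set (Sym2 V))
      rw [Sym2.eq_swap]; exact hcpM₁
  have mm_qk : MaxMatchable T q k' := by
    refine ⟨Walk.cons hcq.symm (Walk.cons hcx (Walk.cons hxk' Walk.nil)), M₂, ?_, hM₂, ?_⟩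
    · simp only [Walk.cons_isPath_iff, Walk.isPath_iff_eq_nil, Walk.support_cons,
        Walk.support_nil, List.mem_cons, List.not_mem_nil, or_false, List.mem_singleton]
      refine ⟨⟨⟨trivial, fun h => hk'x h.symm⟩, ?_⟩, ?_⟩
      · rintro (rfl | h)
        · exact hxc rfl
        · exact hk'c h.symm
      · rintro (rfl | rfl | h)
        · exact hqc rfl
        · exact hxq rfl
        · exact hk'q h.symm
    · show IsAltEdgeList (↑M₂) [s(q, c), s(c, x), s(x, k')]
      refine ⟨?_, hcxM₂, hxkM₂⟩
      show s(q, c) ∈ (↑M₂ : Set (Sym2 V))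
      rw [Sym2.eq_swap]; exact hcqM₂
  constructor
  · refine ⟨c, p, q, k', ?_, mm_pc, mm_qc, mm_pk, mm_qk⟩
    refine List.Pairwise.cons ?_ (List.Pairwise.cons ?_ (List.Pairwise.cons ?_
      (List.pairwise_singleton _ _)))
    · intro a ha
      simp only [List.mem_cons, List.not_mem_nil, or_false, List.mem_singleton] at ha
      rcases ha with rfl | rfl | rfl
      · exact hpc.symm
      · exact hqc.symm
      · exact hk'c.symm
    · intro a ha
      simp only [List.mem_cons, List.not_mem_nil, or_false, List.mem_singleton] at ha
      rcases ha with rfl | rfl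
      · exact hpq
      · exact hk'p.symm
    · intro a ha
      simp only [List.mem_cons, List.not_mem_nil, or_false, List.mem_singleton] at ha
      subst ha
      exact hk'q.symm
  · intro htree
    set H := SimpleGraph.fromRel (MaxMatchable T) with hHdef
    have hPC : H.Adj p c := by
      rw [hHdef, fromRel_adj]; exact ⟨hpc, Or.inl mm_pc⟩
    have hCQ : H.Adj c q := by
      rw [hHdef, fromRel_adj]; exact ⟨Ne.symm hqc, Or.inr mm_qc⟩
    have hQK : H.Adj q k' := by
      rw [hHdef, fromRel_adj]; exact ⟨hk'q.symm, Or.inl mm_qk⟩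
    have hKP : H.Adj k' p := by
      rw [hHdef, fromRel_adj]; exact ⟨hk'p, Or.inr mm_pk⟩
    set cyc : H.Walk p p :=
      Walk.cons hPC (Walk.cons hCQ (Walk.cons hQK (Walk.cons hKP Walk.nil))) with hcycdef
    have hcyc : cyc.IsCycle := by
      rw [Walk.isCycle_def]
      refine ⟨?_, by simp [hcycdef], ?_⟩
      · rw [Walk.isTrail_def]
        have h1 : c ≠ p := Ne.symm hpc
        have h2 : c ≠ q := Ne.symm hqc
        have h3 : q ≠ p := Ne.symm hpq
        have h4 : p ≠ k' := Ne.symm hk'p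
        have h5 : q ≠ k' := Ne.symm hk'q
        have h6 : c ≠ k' := Ne.symm hk'c
        simp [hcycdef, Sym2.eq_iff, hpc, hqc, hpq, hk'p, hk'q, hk'c, h1, h2, h3, h4, h5, h6]
      · have h1 : c ≠ p := Ne.symm hpc
        have h2 : c ≠ q := Ne.symm hqc
        have h3 : q ≠ p := Ne.symm hpq
        have h4 : p ≠ k' := Ne.symm hk'p
        have h5 : q ≠ k' := Ne.symm hk'q
        have h6 : c ≠ k' := Ne.symm hk'c
        simp [hcycdef, hpq, hqc, hpc, hk'p, hk'q, hk'c, h1, h2, h3, h4, h5, h6]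
    exact htree.IsAcyclic cyc hcyc
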